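/- The family 𝒩 of all sets U(S) = ⋃_k (S(a_0)+⋯+S(a_k)), where each a_k is a sequence of positive reals tending to ∞ and S(a) = ⋃_n (-a_n,a_n)·e_n ⊆ ℝ^(ℕ), is a neighborhood base at 0 for a vector topology μ on ℝ^(ℕ), and in this topology the sequence (e_n) converges to 0. -/

import Mathlib

open Filter Pointwise

/-- `a ∈ 𝒜`: a sequence of positive reals tending to `∞`. -/
def memA (a : ℕ → ℝ) : Prop := (∀ n, 0 < a n) ∧ Tendsto a atTop atTop

/-- `S(a) = ⋃ n, (-a_n, a_n)·e_n ⊆ ℝ^(ℕ)`. -/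
def Sset (a : ℕ → ℝ) : Set (ℕ →₀ ℝ) :=
  ⋃ n : ℕ, {x : ℕ →₀ ℝ | ∃ t : ℝ, |t| < a n ∧ x = Finsupp.single n t}

/-- `U(S) = ⋃ k, (S(a_0) + ⋯ + S(a_k))` (Minkowski sums). -/
def Uset (a : ℕ → ℕ → ℝ) : Set (ℕ →₀ ℝ) :=
  ⋃ k : ℕ, ∑ j ∈ Finset.range (k + 1), Sset (a j)

namespace Stmt8

lemma memA_min {a b : ℕ → ℝ} (ha : memA a) (hb : memA b) :
    memA (fun n => min (a n) (b n)) := by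
  refine ⟨fun n => lt_min (ha.1 n) (hb.1 n), tendsto_atTop.2 fun C => ?_⟩
  filter_upwards [tendsto_atTop.1 ha.2 C, tendsto_atTop.1 hb.2 C] with n h1 h2
  exact le_min h1 h2

lemma zero_mem_Sset {a : ℕ → ℝ} (ha : memA a) : (0 : ℕ →₀ ℝ) ∈ Sset a :=
  Set.mem_iUnion.2 ⟨0, 0, by simpa using ha.1 0, (Finsupp.single_zero 0).symm⟩

lemma Sset_mono {a b : ℕ → ℝ} (h : ∀ n, a n ≤ b n) : Sset a ⊆ Sset b := by
  refine Set.iUnion_mono fun n => ?_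
  rintro x ⟨t, ht, rfl⟩
  exact ⟨t, ht.trans_le (h n), rfl⟩

lemma smul_mem_Sset {a : ℕ → ℝ} {t : ℝ} (ht : |t| ≤ 1) {x : ℕ →₀ ℝ}
    (hx : x ∈ Sset a) : t • x ∈ Sset a := by
  obtain ⟨n, s, hs, rfl⟩ := Set.mem_iUnion.1 hx
  refine Set.mem_iUnion.2 ⟨n, t * s, ?_, by rw [Finsupp.smul_single]; rfl⟩
  calc |t * s| = |t| * |s| := abs_mul t s
  _ ≤ 1 * |s| := by gcongr
  _ < a n := by simpa using hs

lemma zero_mem_sum {s : Finset ℕ} {f : ℕ → Set (ℕ →₀ ℝ)}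
    (h : ∀ i ∈ s, (0 : ℕ →₀ ℝ) ∈ f i) : (0 : ℕ →₀ ℝ) ∈ ∑ i ∈ s, f i :=
  (Set.mem_finset_sum s f 0).2 ⟨fun _ => 0, fun {i} hi => h i hi, by simp⟩

lemma sum_sets_mono {s : Finset ℕ} {f g : ℕ → Set (ℕ →₀ ℝ)}
    (h : ∀ i ∈ s, f i ⊆ g i) : ∑ i ∈ s, f i ⊆ ∑ i ∈ s, g i := by
  intro x hx
  obtain ⟨u, hu, rfl⟩ := (Set.mem_finset_sum s f x).1 hx
  exact (Set.mem_finset_sum s g _).2 ⟨u, fun {i} hi => h i hi (hu hi), rfl⟩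

lemma sum_sets_subset {s t : Finset ℕ} (hst : s ⊆ t) {f : ℕ → Set (ℕ →₀ ℝ)}
    (h : ∀ i ∈ t, (0 : ℕ →₀ ℝ) ∈ f i) : ∑ i ∈ s, f i ⊆ ∑ i ∈ t, f i := by
  rw [← Finset.sum_sdiff hst]
  intro x hx
  have h0 : (0 : ℕ →₀ ℝ) ∈ ∑ i ∈ t \ s, f i :=
    zero_mem_sum fun i hi => h i (Finset.mem_sdiff.1 hi).1
  simpa using Set.add_mem_add h0 hx

end Stmt8
namespace Part2
open Stmt8

lemma sum_double (f : ℕ → Set (ℕ →₀ ℝ)) (n : ℕ) :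
    ∑ i ∈ Finset.range (2 * n), f i
      = ∑ j ∈ Finset.range n, (f (2 * j) + f (2 * j + 1)) := by
  induction n with
  | zero => simp
  | succ n ih =>
      rw [Finset.sum_range_succ, ← ih, Nat.mul_succ]
      rw [show 2 * n + 2 = (2 * n + 1) + 1 from rfl, Finset.sum_range_succ,
        Finset.sum_range_succ, add_assoc]

lemma zero_mem_Uset {a : ℕ → ℕ → ℝ} (ha : ∀ k, memA (a k)) : (0 : ℕ →₀ ℝ) ∈ Uset a :=
  Set.mem_iUnion.2 ⟨0, zero_mem_sum fun i _ => zero_mem_Sset (ha i)⟩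

lemma Uset_mono {a b : ℕ → ℕ → ℝ} (h : ∀ k n, a k n ≤ b k n) : Uset a ⊆ Uset b :=
  Set.iUnion_mono fun _ => sum_sets_mono fun j _ => Sset_mono (h j)

lemma Uset_add_subset {a : ℕ → ℕ → ℝ} (ha : ∀ k, memA (a k)) :
    Uset (fun k n => min (a (2 * k) n) (a (2 * k + 1) n))
      + Uset (fun k n => min (a (2 * k) n) (a (2 * k + 1) n)) ⊆ Uset a := by
  set c : ℕ → ℕ → ℝ := fun k n => min (a (2 * k) n) (a (2 * k + 1) n) with hc
  have hcA : ∀ k, memA (c k) := fun k => memA_min (ha _) (ha _)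
  intro z hz
  rw [Set.mem_add] at hz
  obtain ⟨x, hx, y, hy, rfl⟩ := hz
  obtain ⟨k, hk⟩ := Set.mem_iUnion.1 hx
  obtain ⟨m, hm⟩ := Set.mem_iUnion.1 hy
  set K := max k m with hK
  have hsub : ∀ {l : ℕ}, l ≤ K →
      (∑ j ∈ Finset.range (l + 1), Sset (c j)) ⊆ ∑ j ∈ Finset.range (K + 1), Sset (c j) :=
    fun {l} hl => sum_sets_subset (Finset.range_subset_range.2 (by omega))
      (fun i _ => zero_mem_Sset (hcA i))
  have hx' := hsub (le_max_left k m) hk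
  have hy' := hsub (le_max_right k m) hm
  have hxy : x + y ∈ ∑ j ∈ Finset.range (K + 1), (Sset (c j) + Sset (c j)) := by
    rw [Finset.sum_add_distrib]
    exact Set.add_mem_add hx' hy'
  have hstep : ∑ j ∈ Finset.range (K + 1), (Sset (c j) + Sset (c j))
      ⊆ ∑ j ∈ Finset.range (K + 1), (Sset (a (2 * j)) + Sset (a (2 * j + 1))) :=
    sum_sets_mono fun j _ => Set.add_subset_add
      (Sset_mono fun n => min_le_left _ _) (Sset_mono fun n => min_le_right _ _)
  have hdouble : ∑ j ∈ Finset.range (K + 1), (Sset (a (2 * j)) + Sset (a (2 * j + 1)))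
      = ∑ i ∈ Finset.range (2 * K + 1 + 1), Sset (a i) := by
    rw [show 2 * K + 1 + 1 = 2 * (K + 1) from by ring, sum_double]
  refine Set.mem_iUnion.2 ⟨2 * K + 1, ?_⟩
  rw [← hdouble]
  exact hstep hxy

lemma smul_mem_Uset {a : ℕ → ℕ → ℝ} {t : ℝ} (ht : |t| ≤ 1) {x : ℕ →₀ ℝ}
    (hx : x ∈ Uset a) : t • x ∈ Uset a := by
  obtain ⟨k, hk⟩ := Set.mem_iUnion.1 hx
  obtain ⟨g, hg, rfl⟩ := (Set.mem_finset_sum _ _ _).1 hk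
  refine Set.mem_iUnion.2 ⟨k, (Set.mem_finset_sum _ _ _).2
    ⟨fun j => t • g j, fun {i} hi => smul_mem_Sset ht (hg hi), ?_⟩⟩
  rw [Finset.smul_sum]

lemma smul_left_Sset {x₀ : ℝ} {a : ℕ → ℝ} {x : ℕ →₀ ℝ}
    (hx : x ∈ Sset (fun n => a n / (|x₀| + 1))) : x₀ • x ∈ Sset a := by
  obtain ⟨n, t, ht, rfl⟩ := Set.mem_iUnion.1 hx
  have hc : (0:ℝ) < |x₀| + 1 := by positivity
  rw [lt_div_iff₀ hc] at ht
  refine Set.mem_iUnion.2 ⟨n, x₀ * t, ?_, by rw [Finsupp.smul_single]; rfl⟩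
  rw [abs_mul]
  nlinarith [abs_nonneg x₀, abs_nonneg t]

lemma smul_left_Uset {x₀ : ℝ} {a : ℕ → ℕ → ℝ} {x : ℕ →₀ ℝ}
    (hx : x ∈ Uset (fun k n => a k n / (|x₀| + 1))) : x₀ • x ∈ Uset a := by
  obtain ⟨k, hk⟩ := Set.mem_iUnion.1 hx
  obtain ⟨g, hg, rfl⟩ := (Set.mem_finset_sum _ _ _).1 hk
  refine Set.mem_iUnion.2 ⟨k, (Set.mem_finset_sum _ _ _).2
    ⟨fun j => x₀ • g j, fun {i} hi => smul_left_Sset (hg hi), ?_⟩⟩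
  rw [Finset.smul_sum]

lemma memA_div {a : ℕ → ℝ} (ha : memA a) {c : ℝ} (hc : 0 < c) :
    memA (fun n => a n / c) :=
  ⟨fun n => div_pos (ha.1 n) hc, ha.2.atTop_div_const hc⟩

end Part2
namespace Part3
open Stmt8 Part2

lemma finsupp_repr (m₀ : ℕ →₀ ℝ) {s : Finset ℕ} (hs : m₀.support ⊆ s) :
    m₀ = ∑ j ∈ s, Finsupp.single j (m₀ j) := by
  ext n
  rw [Finsupp.finset_sum_apply]
  simp only [Finsupp.single_apply]
  rw [Finset.sum_ite_eq' s n (fun j => m₀ j)]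
  by_cases hn : n ∈ s
  · simp [hn]
  · simp only [hn, if_false]
    exact Finsupp.notMem_support_iff.1 fun h => hn (hs h)

lemma smul_right_mem {a : ℕ → ℕ → ℝ} (ha : ∀ k, memA (a k)) (m₀ : ℕ →₀ ℝ) :
    ∀ᶠ t in nhds (0 : ℝ), t • m₀ ∈ Uset a := by
  set N := m₀.support.sup id with hN
  have hsupp : m₀.support ⊆ Finset.range (N + 1) := fun i hi =>
    Finset.mem_range.2 (Nat.lt_succ_of_le (Finset.le_sup (f := id) hi))
  have key : ∀ᶠ t in nhds (0 : ℝ), ∀ j ∈ Finset.range (N + 1), |t * m₀ j| < a j j := by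
    rw [eventually_all_finset]
    intro j _
    have hcont : Tendsto (fun t : ℝ => t * m₀ j) (nhds 0) (nhds 0) := by
      simpa using (continuous_mul_right (m₀ j)).tendsto 0
    have : {y : ℝ | |y| < a j j} ∈ nhds (0 : ℝ) := by
      have hb := Metric.ball_mem_nhds (0 : ℝ) ((ha j).1 j)
      refine Filter.mem_of_superset hb fun y hy => ?_
      simpa [Real.norm_eq_abs] using Metric.mem_ball.1 hy
    exact hcont this
  filter_upwards [key] with t ht
  have hrep : ∑ j ∈ Finset.range (N + 1), Finsupp.single j (t * m₀ j) = t • m₀ := by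
    calc ∑ j ∈ Finset.range (N + 1), Finsupp.single j (t * m₀ j)
        = ∑ j ∈ Finset.range (N + 1), t • Finsupp.single j (m₀ j) := by
          refine Finset.sum_congr rfl fun j _ => ?_
          rw [Finsupp.smul_single, smul_eq_mul]
      _ = t • ∑ j ∈ Finset.range (N + 1), Finsupp.single j (m₀ j) := (Finset.smul_sum).symm
      _ = t • m₀ := by rw [← finsupp_repr m₀ hsupp]
  refine Set.mem_iUnion.2 ⟨N, (Set.mem_finset_sum _ _ _).2
    ⟨fun j => Finsupp.single j (t * m₀ j), fun {j} hj =>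
      Set.mem_iUnion.2 ⟨j, t * m₀ j, ht j hj, rfl⟩, hrep⟩⟩

end Part3
open Stmt8 Part2 Part3 in
def B8 : ModuleFilterBasis ℝ (ℕ →₀ ℝ) where
  sets := {U | ∃ a : ℕ → ℕ → ℝ, (∀ k, memA (a k)) ∧ U = Uset a}
  nonempty := ⟨Uset (fun _ n => (n : ℝ) + 1),
    ⟨_, fun k => ⟨fun n => by positivity,
      tendsto_atTop_add_const_right _ 1 tendsto_natCast_atTop_atTop⟩, rfl⟩⟩
  inter_sets := by
    rintro U V ⟨a, ha, rfl⟩ ⟨b, hb, rfl⟩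
    exact ⟨Uset (fun k n => min (a k n) (b k n)),
      ⟨_, fun k => memA_min (ha k) (hb k), rfl⟩,
      Set.subset_inter (Uset_mono fun k n => min_le_left _ _)
        (Uset_mono fun k n => min_le_right _ _)⟩
  zero' := by rintro U ⟨a, ha, rfl⟩; exact zero_mem_Uset ha
  add' := by
    rintro U ⟨a, ha, rfl⟩
    exact ⟨Uset (fun k n => min (a (2 * k) n) (a (2 * k + 1) n)),
      ⟨_, fun k => memA_min (ha _) (ha _), rfl⟩, Uset_add_subset ha⟩
  neg' := by
    rintro U ⟨a, ha, rfl⟩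
    refine ⟨Uset a, ⟨a, ha, rfl⟩, fun x hx => ?_⟩
    have := smul_mem_Uset (t := -1) (by norm_num) hx
    simpa [Set.mem_preimage] using this
  conj' := by
    rintro x₀ U ⟨a, ha, rfl⟩
    refine ⟨Uset a, ⟨a, ha, rfl⟩, fun x hx => ?_⟩
    have h : x₀ + x + -x₀ = x := by abel
    simpa [Set.mem_preimage, h] using hx
  smul' := by
    rintro U ⟨a, ha, rfl⟩
    refine ⟨Metric.ball (0 : ℝ) 1, Metric.ball_mem_nhds _ one_pos, Uset a, ⟨a, ha, rfl⟩, ?_⟩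
    rintro z hz
    rw [Set.mem_smul] at hz
    obtain ⟨t, ht, x, hx, rfl⟩ := hz
    refine smul_mem_Uset ?_ hx
    have := Metric.mem_ball.1 ht
    rw [dist_zero_right, Real.norm_eq_abs] at this
    exact this.le
  smul_left' := by
    rintro x₀ U ⟨a, ha, rfl⟩
    exact ⟨Uset (fun k n => a k n / (|x₀| + 1)),
      ⟨_, fun k => memA_div (ha k) (by positivity), rfl⟩,
      fun x hx => smul_left_Uset hx⟩
  smul_right' := by
    rintro m₀ U ⟨a, ha, rfl⟩
    exact smul_right_mem ha m₀



open Stmt8 Part2 Part3 in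
/-- the family `𝒩 = {U(S)}` is a neighborhood base at `0` for a vector
topology `μ` on `ℝ^(ℕ)`, and in this topology the sequence `(e_n)` converges to `0`. -/
theorem stmt8 :
    ∃ μ : TopologicalSpace (ℕ →₀ ℝ),
      @IsTopologicalAddGroup (ℕ →₀ ℝ) μ _ ∧
      @ContinuousSMul ℝ (ℕ →₀ ℝ) _ _ μ ∧
      (@nhds (ℕ →₀ ℝ) μ 0).HasBasis (fun a : ℕ → ℕ → ℝ => ∀ k, memA (a k)) Uset ∧
      Tendsto (fun n : ℕ => Finsupp.single n (1 : ℝ)) atTop (@nhds (ℕ →₀ ℝ) μ 0) := by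
  have hB : (@nhds _ B8.topology 0).HasBasis
      (fun V : Set (ℕ →₀ ℝ) => V ∈ B8.toAddGroupFilterBasis) id :=
    B8.toAddGroupFilterBasis.nhds_zero_hasBasis
  have hbasis : (@nhds _ B8.topology 0).HasBasis
      (fun a : ℕ → ℕ → ℝ => ∀ k, memA (a k)) Uset := by
    refine hB.to_hasBasis ?_ ?_
    · rintro U ⟨a, ha, rfl⟩
      exact ⟨a, ha, subset_rfl⟩
    · intro a ha
      exact ⟨Uset a, ⟨a, ha, rfl⟩, subset_rfl⟩
  refine ⟨B8.topology, B8.toAddGroupFilterBasis.isTopologicalAddGroup, B8.continuousSMul,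
    hbasis, ?_⟩
  rw [hbasis.tendsto_right_iff]
  intro a ha
  filter_upwards [tendsto_atTop.1 (ha 0).2 2] with n hn
  refine Set.mem_iUnion.2 ⟨0, ?_⟩
  rw [Finset.sum_range_one]
  exact Set.mem_iUnion.2 ⟨n, 1, by rw [abs_one]; linarith, rfl⟩
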